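/- Deterministic localization of the weighted CUSUM maximizer under noise control (Step Four of the proof of Theorem 2). Suppose μ ∈ ℝ^N has a single change at τ on [s,e] with κ = |α − β| > 0, let ε ∈ ℝ^N, set Y = μ + ε, and fix r > 0. Assume that for every s ≤ b < e: |⟨ε, ψ_{s,e}^{b}⟩_w| ≤ r, and |⟨v_b, ε⟩_w| ≤ r·‖v_b‖_w whenever v_b := ψ_{s,e}^{τ}·⟨ψ_{s,e}^{τ}, μ⟩_w − ψ_{s,e}^{b}·⟨ψ_{s,e}^{b}, μ⟩_w ≠ 0. If min{S^w_{s:τ}, S^w_{(τ+1):e}}·κ² > 2(1+√2)²·r², then every maximizer b̂ of b ↦ W_{s,e}^{Y}(b) over s ≤ b < e satisfies Σ_{i : min(τ,b̂) < i ≤ max(τ,b̂)} w_i ≤ 2(1+√2)²·r²/κ². -/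

import Mathlib

open MeasureTheory ProbabilityTheory

/-- Cumulative weight `S^w_{u:v} = Σ_{i=u}^{v} w_i`. -/
noncomputable def Sw (w : ℕ → ℝ) (u v : ℕ) : ℝ := ∑ i ∈ Finset.Icc u v, w i

/-- Weighted inner product `⟨x,y⟩_w = Σ_{i=1}^{N} w_i x_i y_i`. -/
noncomputable def winner (N : ℕ) (w x y : ℕ → ℝ) : ℝ :=
  ∑ i ∈ Finset.Icc 1 N, w i * x i * y i

/-- Weighted norm `‖x‖_w = ⟨x,x⟩_w^{1/2}`. -/
noncomputable def wnorm (N : ℕ) (w x : ℕ → ℝ) : ℝ := Real.sqrt (winner N w x x)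

/-- Weighted CUSUM statistic `W_{s,e}^{v}(b)`. -/
noncomputable def wCUSUM (w v : ℕ → ℝ) (s e b : ℕ) : ℝ :=
  Real.sqrt (Sw w s b * Sw w (b + 1) e / Sw w s e) *
    |(Sw w s b)⁻¹ * ∑ i ∈ Finset.Icc s b, w i * v i
      - (Sw w (b + 1) e)⁻¹ * ∑ i ∈ Finset.Icc (b + 1) e, w i * v i|

/-- The CUSUM contrast vector `ψ_{s,e}^{b}`. -/
noncomputable def psiContrast (w : ℕ → ℝ) (s e b : ℕ) (i : ℕ) : ℝ :=
  if s ≤ i ∧ i ≤ b then Real.sqrt (Sw w (b + 1) e / (Sw w s b * Sw w s e))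
  else if b < i ∧ i ≤ e then -Real.sqrt (Sw w s b / (Sw w s e * Sw w (b + 1) e))
  else 0

lemma sum_Icc_split (f : ℕ → ℝ) {u m v : ℕ} (hu : 1 ≤ u) (h1 : u ≤ m + 1) (h2 : m ≤ v) :
    ∑ i ∈ Finset.Icc u v, f i = (∑ i ∈ Finset.Icc u m, f i) + ∑ i ∈ Finset.Icc (m+1) v, f i := by
  obtain ⟨u', rfl⟩ : ∃ u', u = u' + 1 := ⟨u - 1, (Nat.succ_pred_eq_of_pos hu).symm⟩
  rw [Finset.Icc_add_one_left_eq_Ioc, Finset.Icc_add_one_left_eq_Ioc, Finset.Icc_add_one_left_eq_Ioc]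
  exact (Finset.sum_Ioc_consecutive _ (by omega) h2).symm

lemma Sw_pos {w : ℕ → ℝ} (hw : ∀ i, 0 < w i) {u v : ℕ} (h : u ≤ v) : 0 < Sw w u v :=
  Finset.sum_pos (fun i _ => hw i) (Finset.nonempty_Icc.2 h)

lemma Sw_split (w : ℕ → ℝ) {u m v : ℕ} (hu : 1 ≤ u) (h1 : u ≤ m + 1) (h2 : m ≤ v) :
    Sw w u v = Sw w u m + Sw w (m+1) v := sum_Icc_split w hu h1 h2

lemma winner_comm (N : ℕ) (w x y : ℕ → ℝ) : winner N w x y = winner N w y x :=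
  Finset.sum_congr rfl fun i _ => by ring

lemma winner_sub_smul (N : ℕ) (w f g y : ℕ → ℝ) (c d : ℝ) :
    winner N w (fun i => f i * c - g i * d) y
      = c * winner N w f y - d * winner N w g y := by
  unfold winner
  rw [Finset.mul_sum, Finset.mul_sum, ← Finset.sum_sub_distrib]
  exact Finset.sum_congr rfl fun i _ => by ring

lemma winner_add_left (N : ℕ) (w x y z : ℕ → ℝ) :
    winner N w (fun i => x i + y i) z = winner N w x z + winner N w y z := by
  unfold winner
  rw [← Finset.sum_add_distrib]
  exact Finset.sum_congr rfl fun i _ => by ring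

lemma winner_neg_left (N : ℕ) (w x y : ℕ → ℝ) :
    winner N w (fun i => -x i) y = - winner N w x y := by
  unfold winner
  rw [← Finset.sum_neg_distrib]
  exact Finset.sum_congr rfl fun i _ => by ring

lemma winner_neg_right (N : ℕ) (w x y : ℕ → ℝ) :
    winner N w x (fun i => -y i) = - winner N w x y := by
  rw [winner_comm, winner_neg_left, winner_comm]

lemma harmonic_lb (c G X k : ℝ) (hG : 0 < G) (hX : 0 < X)
    (h1 : 2 * c < G * k) (h2 : 2 * c < X * k) : c < k * (G * X) / (G + X) := by
  rw [lt_div_iff₀ (by linarith)]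
  nlinarith [mul_lt_mul_of_pos_right h1 hX, mul_lt_mul_of_pos_right h2 hG]

set_option maxHeartbeats 1000000 in
lemma final_arith (r a ab t eτ eb : ℝ) (hr : 0 < r) (ha : 0 < a)
    (hab : 0 < ab) (ht : (1 + Real.sqrt 2) * r < t)
    (h1 : ab ^ 2 = a ^ 2 - t ^ 2)
    (heτ : |eτ| ≤ r) (heb : |eb| ≤ r)
    (hmax : |a + eτ| ≤ |ab + eb|)
    (hvy : t ^ 2 - r * t ≤ a * (a + eτ) - ab * (ab + eb)) : False := by
  obtain ⟨heτ1, heτ2⟩ := abs_le.1 heτ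
  obtain ⟨heb1, heb2⟩ := abs_le.1 heb
  set s := Real.sqrt 2 with hs
  have hs2 : s ^ 2 = 2 := Real.sq_sqrt (by norm_num)
  have hs0 : 0 ≤ s := Real.sqrt_nonneg 2
  have hs1 : 1 < s := by nlinarith
  have ht0 : 0 < t := lt_trans (by nlinarith [mul_pos hr hr]) ht
  have hta : t < a := by nlinarith [mul_pos hab hab]
  have ht2r : 0 < t - 2 * r := by nlinarith [mul_pos (sub_pos.2 hs1) hr]
  have hApos : 0 < a + eτ := by linarith
  have hge : a + eτ ≤ |ab + eb| := by rwa [abs_of_pos hApos] at hmax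
  have hB : 0 < ab + eb := by
    by_contra h
    push_neg at h
    rw [abs_of_nonpos h] at hge
    linarith
  have hBA : a + eτ ≤ ab + eb := by rwa [abs_of_pos hB] at hge
  have hd : 0 ≤ a - ab := by
    by_contra h
    push_neg at h
    have h2 : a * a < ab * ab := mul_self_lt_mul_self ha.le (by linarith)
    nlinarith [sq_nonneg t]
  have step1 : a * (a + eτ) - ab * (ab + eb) ≤ (a - ab) * (ab + r) := by
    have e1 : a * (a + eτ) ≤ a * (ab + eb) := mul_le_mul_of_nonneg_left hBA ha.le
    have e2 : (a - ab) * (ab + eb) ≤ (a - ab) * (ab + r) :=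
      mul_le_mul_of_nonneg_left (by linarith) hd
    nlinarith [e1, e2]
  have ht2eq : t ^ 2 = (a - ab) * (a + ab) := by linear_combination h1
  have step2 : (a - ab) * (a - r) ≤ r * t := by
    have hx := hvy.trans step1
    have e : (a - ab) * (a - r) = t ^ 2 - (a - ab) * (ab + r) := by
      linear_combination -ht2eq
    rw [e]; linarith
  have step3 : t * (a - r) ≤ r * (a + ab) := by
    have h3 := mul_le_mul_of_nonneg_right step2 (by linarith : (0:ℝ) ≤ a + ab)
    have e2 : t * (t * (a - r)) = (a - ab) * (a - r) * (a + ab) := by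
      linear_combination (a - r) * ht2eq
    have key : t * (t * (a - r)) ≤ t * (r * (a + ab)) := by
      rw [e2, (by ring : t * (r * (a + ab)) = r * t * (a + ab))]; exact h3
    exact le_of_mul_le_mul_left key ht0
  have hu_pos : 0 < t * (a - r) - r * a := by
    have h5 : t * (t - r) < a * (t - r) := mul_lt_mul_of_pos_right hta (by linarith)
    have h6 : 0 < t * (t - 2 * r) := mul_pos ht0 ht2r
    nlinarith [h5, h6]
  have step5 : (t * (a - r) - r * a) ^ 2 ≤ r ^ 2 * (a ^ 2 - t ^ 2) := by
    have h4 : t * (a - r) - r * a ≤ r * ab := by linarith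
    have h7 := mul_self_le_mul_self hu_pos.le h4
    nlinarith [h7, h1]
  have h7 : s * r < t - r := by nlinarith [ht]
  have h8 : s * r * (s * r) = 2 * r ^ 2 := by linear_combination r ^ 2 * hs2
  have hdisc : 2 * r ^ 2 < (t - r) ^ 2 := by
    nlinarith [mul_self_lt_mul_self (by positivity : (0:ℝ) ≤ s * r) h7, h8]
  have idq : t * ((t - 2*r) * a ^ 2 - 2*r*(t - r)*a + 2*t*r^2)
      = (t * (a - r) - r * a) ^ 2 - r ^ 2 * (a ^ 2 - t ^ 2) := by ring
  have hq : t * ((t - 2*r) * a ^ 2 - 2*r*(t - r)*a + 2*t*r^2) ≤ 0 := by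
    rw [idq]; linarith
  have hq0 : (t - 2*r) * a ^ 2 - 2*r*(t - r)*a + 2*t*r^2 ≤ 0 := by
    by_contra h
    push_neg at h
    linarith [mul_pos ht0 h]
  have idq2 : (t - 2*r) * ((t - 2*r) * a ^ 2 - 2*r*(t - r)*a + 2*t*r^2)
      = ((t - 2*r)*a - r*(t - r)) ^ 2 + r ^ 2 * ((t - r) ^ 2 - 2 * r ^ 2) := by ring
  have hpos2 : 0 < (t - 2*r) * ((t - 2*r) * a ^ 2 - 2*r*(t - r)*a + 2*t*r^2) := by
    rw [idq2]
    have := mul_pos (pow_pos hr 2) (sub_pos.2 hdisc)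
    nlinarith [sq_nonneg ((t - 2*r)*a - r*(t - r))]
  linarith [mul_nonpos_of_nonneg_of_nonpos ht2r.le hq0]

set_option maxHeartbeats 2000000 in
theorem aux_loc
    (N : ℕ) (w : ℕ → ℝ) (hw : ∀ i, 0 < w i)
    (μvec : ℕ → ℝ) (s e τ : ℕ)
    (hs : 1 ≤ s) (hsτ : s ≤ τ) (hτe : τ < e) (heN : e ≤ N)
    (α β : ℝ)
    (hα : ∀ i, s ≤ i → i ≤ τ → μvec i = α)
    (hβ : ∀ i, τ < i → i ≤ e → μvec i = β)
    (hαβ : β < α)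
    (ε Y : ℕ → ℝ) (hY : ∀ i, Y i = μvec i + ε i)
    (r : ℝ) (hr : 0 < r)
    (hεψ : ∀ b, s ≤ b → b < e → |winner N w ε (psiContrast w s e b)| ≤ r)
    (hεv : ∀ b, s ≤ b → b < e →
      wnorm N w (fun i =>
        psiContrast w s e τ i * winner N w (psiContrast w s e τ) μvec
          - psiContrast w s e b i * winner N w (psiContrast w s e b) μvec) ≠ 0 →
      |winner N w (fun i =>
        psiContrast w s e τ i * winner N w (psiContrast w s e τ) μvec
          - psiContrast w s e b i * winner N w (psiContrast w s e b) μvec) ε|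
        ≤ r * wnorm N w (fun i =>
            psiContrast w s e τ i * winner N w (psiContrast w s e τ) μvec
              - psiContrast w s e b i * winner N w (psiContrast w s e b) μvec))
    (hsnr : min (Sw w s τ) (Sw w (τ + 1) e) * |α - β| ^ 2
      > 2 * (1 + Real.sqrt 2) ^ 2 * r ^ 2)
    (bhat : ℕ) (hbhat1 : s ≤ bhat) (hbhat2 : bhat < e)
    (hbhat_max : ∀ b, s ≤ b → b < e → wCUSUM w Y s e b ≤ wCUSUM w Y s e bhat) :
    ∑ i ∈ Finset.Icc (min τ bhat + 1) (max τ bhat), w i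
      ≤ 2 * (1 + Real.sqrt 2) ^ 2 * r ^ 2 / |α - β| ^ 2 := by
  have hκpos : 0 < α - β := sub_pos.2 hαβ
  have hκeq : |α - β| = α - β := abs_of_pos hκpos
  rw [hκeq] at hsnr ⊢
  have hse : s ≤ e := hsτ.trans hτe.le
  have hT : 0 < Sw w s e := Sw_pos hw hse
  have hP : 0 < Sw w s τ := Sw_pos hw hsτ
  have hQ : 0 < Sw w (τ+1) e := Sw_pos hw hτe
  have hTsplit : Sw w s e = Sw w s τ + Sw w (τ+1) e := Sw_split w hs (by omega) hτe.le
  -- restriction of inner products with ψ to [s,e]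
  have hrestrict : ∀ (x : ℕ → ℝ) (b : ℕ), s ≤ b → b < e →
      winner N w x (psiContrast w s e b)
        = ∑ i ∈ Finset.Icc s e, w i * x i * psiContrast w s e b i := by
    intro x b hb1 hb2
    refine (Finset.sum_subset (Finset.Icc_subset_Icc hs heN) ?_).symm
    intro i hi hni
    simp only [Finset.mem_Icc, not_and, not_le] at hni
    have hψ : psiContrast w s e b i = 0 := by
      unfold psiContrast
      rw [if_neg (by omega), if_neg (by omega)]
    rw [hψ]; ring
  -- evaluation of inner products with ψ
  have hpsi_eval : ∀ (x : ℕ → ℝ) (b : ℕ), s ≤ b → b < e →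
      winner N w x (psiContrast w s e b)
        = Real.sqrt (Sw w (b+1) e / (Sw w s b * Sw w s e)) * (∑ i ∈ Finset.Icc s b, w i * x i)
          - Real.sqrt (Sw w s b / (Sw w s e * Sw w (b+1) e))
              * (∑ i ∈ Finset.Icc (b+1) e, w i * x i) := by
    intro x b hb1 hb2
    rw [hrestrict x b hb1 hb2, sum_Icc_split _ hs (by omega) hb2.le, sub_eq_add_neg]
    congr 1
    · rw [Finset.mul_sum]
      refine Finset.sum_congr rfl fun i hi => ?_
      rw [Finset.mem_Icc] at hi
      unfold psiContrast
      rw [if_pos ⟨hi.1, hi.2⟩]; ring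
    · rw [Finset.mul_sum, ← Finset.sum_neg_distrib]
      refine Finset.sum_congr rfl fun i hi => ?_
      rw [Finset.mem_Icc] at hi
      unfold psiContrast
      rw [if_neg (by omega), if_pos ⟨by omega, hi.2⟩]; ring
  -- sums of w·μ over intervals of constancy
  have hconst : ∀ (u v2 : ℕ) (c : ℝ), (∀ i, u ≤ i → i ≤ v2 → μvec i = c) →
      ∑ i ∈ Finset.Icc u v2, w i * μvec i = c * Sw w u v2 := by
    intro u v2 c hc
    rw [Sw, Finset.mul_sum]
    refine Finset.sum_congr rfl fun i hi => ?_
    rw [Finset.mem_Icc] at hi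
    rw [hc i hi.1 hi.2]; ring
  -- sqrt algebra helpers
  have hsq1 : ∀ p q : ℝ, 0 < p → 0 < q →
      Real.sqrt (q / (p * Sw w s e)) * p = Real.sqrt (p * q / Sw w s e) := by
    intro p q hp hq
    have h : q / (p * Sw w s e) * p ^ 2 = p * q / Sw w s e := by
      field_simp
    calc Real.sqrt (q / (p * Sw w s e)) * p
        = Real.sqrt (q / (p * Sw w s e)) * Real.sqrt (p ^ 2) := by
          rw [Real.sqrt_sq hp.le]
      _ = Real.sqrt (q / (p * Sw w s e) * p ^ 2) := (Real.sqrt_mul (by positivity) _).symm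
      _ = _ := by rw [h]
  have hsq2 : ∀ p q : ℝ, 0 < p → 0 < q →
      Real.sqrt (p / (Sw w s e * q)) * q = Real.sqrt (p * q / Sw w s e) := by
    intro p q hp hq
    have h : p / (Sw w s e * q) * q ^ 2 = p * q / Sw w s e := by
      field_simp
    calc Real.sqrt (p / (Sw w s e * q)) * q
        = Real.sqrt (p / (Sw w s e * q)) * Real.sqrt (q ^ 2) := by
          rw [Real.sqrt_sq hq.le]
      _ = Real.sqrt (p / (Sw w s e * q) * q ^ 2) := (Real.sqrt_mul (by positivity) _).symm
      _ = _ := by rw [h]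
  -- the signal inner products
  have hA_left : ∀ b, s ≤ b → b ≤ τ → winner N w (psiContrast w s e b) μvec
      = (α - β) * Sw w (τ+1) e * Real.sqrt (Sw w s b / (Sw w s e * Sw w (b+1) e)) := by
    intro b hb1 hb2
    have hbe : b < e := lt_of_le_of_lt hb2 hτe
    have hp : 0 < Sw w s b := Sw_pos hw hb1
    have hq : 0 < Sw w (b+1) e := Sw_pos hw (by omega)
    rw [winner_comm, hpsi_eval μvec b hb1 hbe,
      hconst s b α (fun i h1 h2 => hα i h1 (h2.trans hb2))]
    have h2 : ∑ i ∈ Finset.Icc (b+1) e, w i * μvec i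
        = α * Sw w (b+1) τ + β * Sw w (τ+1) e := by
      rw [sum_Icc_split _ (by omega) (by omega) hτe.le,
        hconst (b+1) τ α (fun i h1 h2 => hα i (by omega) h2),
        hconst (τ+1) e β (fun i h1 h2 => hβ i (by omega) h2)]
    rw [h2]
    have hqsplit : Sw w (b+1) e = Sw w (b+1) τ + Sw w (τ+1) e :=
      Sw_split w (by omega) (by omega) hτe.le
    have key : Real.sqrt (Sw w (b+1) e / (Sw w s b * Sw w s e)) * Sw w s b
        = Real.sqrt (Sw w s b / (Sw w s e * Sw w (b+1) e)) * Sw w (b+1) e := by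
      rw [hsq1 _ _ hp hq, hsq2 _ _ hp hq]
    linear_combination α * key
      + (α * Real.sqrt (Sw w s b / (Sw w s e * Sw w (b+1) e))) * hqsplit
  have hA_right : ∀ b, τ ≤ b → b < e → winner N w (psiContrast w s e b) μvec
      = (α - β) * Sw w s τ * Real.sqrt (Sw w (b+1) e / (Sw w s b * Sw w s e)) := by
    intro b hb1 hb2
    have hp : 0 < Sw w s b := Sw_pos hw (hsτ.trans hb1)
    have hq : 0 < Sw w (b+1) e := Sw_pos hw (by omega)
    rw [winner_comm, hpsi_eval μvec b (hsτ.trans hb1) hb2,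
      hconst (b+1) e β (fun i h1 h2 => hβ i (by omega) h2)]
    have h2 : ∑ i ∈ Finset.Icc s b, w i * μvec i
        = α * Sw w s τ + β * Sw w (τ+1) b := by
      rw [sum_Icc_split _ hs (by omega) hb1,
        hconst s τ α (fun i h1 h2 => hα i h1 h2),
        hconst (τ+1) b β (fun i h1 h2 => hβ i (by omega) (h2.trans hb2.le))]
    rw [h2]
    have hpsplit : Sw w s b = Sw w s τ + Sw w (τ+1) b :=
      Sw_split w hs (by omega) hb1
    have key : Real.sqrt (Sw w (b+1) e / (Sw w s b * Sw w s e)) * Sw w s b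
        = Real.sqrt (Sw w s b / (Sw w s e * Sw w (b+1) e)) * Sw w (b+1) e := by
      rw [hsq1 _ _ hp hq, hsq2 _ _ hp hq]
    linear_combination β * key
      - (β * Real.sqrt (Sw w (b+1) e / (Sw w s b * Sw w s e))) * hpsplit
  have hAτ : winner N w (psiContrast w s e τ) μvec
      = (α - β) * Real.sqrt (Sw w s τ * Sw w (τ+1) e / Sw w s e) := by
    rw [hA_left τ hsτ le_rfl, mul_assoc,
      mul_comm (Sw w (τ+1) e) (Real.sqrt (Sw w s τ / (Sw w s e * Sw w (τ+1) e))),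
      hsq2 _ _ hP hQ]
  have hAτpos : 0 < winner N w (psiContrast w s e τ) μvec := by
    rw [hAτ]
    exact mul_pos hκpos (Real.sqrt_pos.2 (by positivity))
  have hAτsq : (winner N w (psiContrast w s e τ) μvec) ^ 2
      = (α - β) ^ 2 * (Sw w s τ * Sw w (τ+1) e / Sw w s e) := by
    rw [hAτ, mul_pow, Real.sq_sqrt (by positivity)]
  have hPQ : Sw w s τ + Sw w (τ+1) e ≠ 0 := by positivity
  -- pointwise identity: Aτ·ψτ = μ − m on [s,e]
  have hpoint : ∀ i ∈ Finset.Icc s e,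
      psiContrast w s e τ i * winner N w (psiContrast w s e τ) μvec
        = μvec i - (α * Sw w s τ + β * Sw w (τ+1) e) / Sw w s e := by
    intro i hi
    rw [Finset.mem_Icc] at hi
    rw [hAτ]
    by_cases hiτ : i ≤ τ
    · unfold psiContrast
      rw [if_pos ⟨hi.1, hiτ⟩, hα i hi.1 hiτ]
      have h2 : Real.sqrt (Sw w (τ+1) e / (Sw w s τ * Sw w s e))
          * Real.sqrt (Sw w s τ * Sw w (τ+1) e / Sw w s e)
          = Sw w (τ+1) e / Sw w s e := by
        rw [← Real.sqrt_mul (by positivity),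
          show Sw w (τ+1) e / (Sw w s τ * Sw w s e) * (Sw w s τ * Sw w (τ+1) e / Sw w s e)
            = (Sw w (τ+1) e / Sw w s e) ^ 2 from by field_simp]
        exact Real.sqrt_sq (by positivity)
      calc Real.sqrt (Sw w (τ+1) e / (Sw w s τ * Sw w s e))
            * ((α - β) * Real.sqrt (Sw w s τ * Sw w (τ+1) e / Sw w s e))
          = (α - β) * (Real.sqrt (Sw w (τ+1) e / (Sw w s τ * Sw w s e))
              * Real.sqrt (Sw w s τ * Sw w (τ+1) e / Sw w s e)) := by ring
        _ = (α - β) * (Sw w (τ+1) e / Sw w s e) := by rw [h2]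
        _ = α - (α * Sw w s τ + β * Sw w (τ+1) e) / Sw w s e := by
            rw [hTsplit]; field_simp; ring
    · unfold psiContrast
      rw [if_neg (by omega), if_pos ⟨by omega, hi.2⟩, hβ i (by omega) hi.2]
      have h2 : Real.sqrt (Sw w s τ / (Sw w s e * Sw w (τ+1) e))
          * Real.sqrt (Sw w s τ * Sw w (τ+1) e / Sw w s e)
          = Sw w s τ / Sw w s e := by
        rw [← Real.sqrt_mul (by positivity),
          show Sw w s τ / (Sw w s e * Sw w (τ+1) e) * (Sw w s τ * Sw w (τ+1) e / Sw w s e)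
            = (Sw w s τ / Sw w s e) ^ 2 from by field_simp]
        exact Real.sqrt_sq (by positivity)
      calc -Real.sqrt (Sw w s τ / (Sw w s e * Sw w (τ+1) e))
            * ((α - β) * Real.sqrt (Sw w s τ * Sw w (τ+1) e / Sw w s e))
          = -((α - β) * (Real.sqrt (Sw w s τ / (Sw w s e * Sw w (τ+1) e))
              * Real.sqrt (Sw w s τ * Sw w (τ+1) e / Sw w s e))) := by ring
        _ = -((α - β) * (Sw w s τ / Sw w s e)) := by rw [h2]
        _ = β - (α * Sw w s τ + β * Sw w (τ+1) e) / Sw w s e := by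
            rw [hTsplit]; field_simp; ring
  -- unit norm of ψ
  have hnorm : ∀ b, s ≤ b → b < e →
      winner N w (psiContrast w s e b) (psiContrast w s e b) = 1 := by
    intro b hb1 hb2
    have hp : 0 < Sw w s b := Sw_pos hw hb1
    have hq : 0 < Sw w (b+1) e := Sw_pos hw (by omega)
    have hTb : Sw w s e = Sw w s b + Sw w (b+1) e := Sw_split w hs (by omega) hb2.le
    rw [hpsi_eval (psiContrast w s e b) b hb1 hb2]
    have h1 : ∑ i ∈ Finset.Icc s b, w i * psiContrast w s e b i
        = Real.sqrt (Sw w (b+1) e / (Sw w s b * Sw w s e)) * Sw w s b := by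
      calc ∑ i ∈ Finset.Icc s b, w i * psiContrast w s e b i
          = ∑ i ∈ Finset.Icc s b,
              Real.sqrt (Sw w (b+1) e / (Sw w s b * Sw w s e)) * w i := by
            refine Finset.sum_congr rfl fun i hi => ?_
            rw [Finset.mem_Icc] at hi
            unfold psiContrast
            rw [if_pos ⟨hi.1, hi.2⟩]; ring
        _ = Real.sqrt (Sw w (b+1) e / (Sw w s b * Sw w s e)) * Sw w s b :=
            (Finset.mul_sum _ _ _).symm
    have h2 : ∑ i ∈ Finset.Icc (b+1) e, w i * psiContrast w s e b i
        = -(Real.sqrt (Sw w s b / (Sw w s e * Sw w (b+1) e)) * Sw w (b+1) e) := by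
      calc ∑ i ∈ Finset.Icc (b+1) e, w i * psiContrast w s e b i
          = ∑ i ∈ Finset.Icc (b+1) e,
              -(Real.sqrt (Sw w s b / (Sw w s e * Sw w (b+1) e)) * w i) := by
            refine Finset.sum_congr rfl fun i hi => ?_
            rw [Finset.mem_Icc] at hi
            unfold psiContrast
            rw [if_neg (by omega), if_pos ⟨by omega, hi.2⟩]; ring
        _ = -(Real.sqrt (Sw w s b / (Sw w s e * Sw w (b+1) e)) * Sw w (b+1) e) := by
            rw [Finset.sum_neg_distrib]
            exact congrArg Neg.neg (Finset.mul_sum _ _ _).symm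
    rw [h1, h2]
    have e1 : Real.sqrt (Sw w (b+1) e / (Sw w s b * Sw w s e))
        * Real.sqrt (Sw w (b+1) e / (Sw w s b * Sw w s e))
        = Sw w (b+1) e / (Sw w s b * Sw w s e) := Real.mul_self_sqrt (by positivity)
    have e2 : Real.sqrt (Sw w s b / (Sw w s e * Sw w (b+1) e))
        * Real.sqrt (Sw w s b / (Sw w s e * Sw w (b+1) e))
        = Sw w s b / (Sw w s e * Sw w (b+1) e) := Real.mul_self_sqrt (by positivity)
    rw [show ∀ c1 c2 p q : ℝ, c1 * (c1 * p) - c2 * -(c2 * q) = c1 * c1 * p + c2 * c2 * q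
      from fun _ _ _ _ => by ring, e1, e2, hTb]
    field_simp
    ring
  -- ψ is orthogonal to constants
  have hzero : ∀ b, s ≤ b → b < e →
      winner N w (fun _ => (1:ℝ)) (psiContrast w s e b) = 0 := by
    intro b hb1 hb2
    have hp : 0 < Sw w s b := Sw_pos hw hb1
    have hq : 0 < Sw w (b+1) e := Sw_pos hw (by omega)
    rw [hpsi_eval (fun _ => (1:ℝ)) b hb1 hb2]
    have h1 : ∑ i ∈ Finset.Icc s b, w i * (1:ℝ) = Sw w s b := by simp [Sw]
    have h2 : ∑ i ∈ Finset.Icc (b+1) e, w i * (1:ℝ) = Sw w (b+1) e := by simp [Sw]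
    rw [h1, h2, hsq1 _ _ hp hq, hsq2 _ _ hp hq, sub_self]
  -- cross inner products
  have hcross : ∀ b, s ≤ b → b < e →
      winner N w (psiContrast w s e τ) μvec
          * winner N w (psiContrast w s e τ) (psiContrast w s e b)
        = winner N w (psiContrast w s e b) μvec := by
    intro b hb1 hb2
    have h1 := hrestrict (psiContrast w s e τ) b hb1 hb2
    calc winner N w (psiContrast w s e τ) μvec
          * winner N w (psiContrast w s e τ) (psiContrast w s e b)
        = ∑ i ∈ Finset.Icc s e, winner N w (psiContrast w s e τ) μvec
            * (w i * psiContrast w s e τ i * psiContrast w s e b i) := by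
          rw [h1, Finset.mul_sum]
      _ = ∑ i ∈ Finset.Icc s e, (w i * μvec i * psiContrast w s e b i
            - (α * Sw w s τ + β * Sw w (τ+1) e) / Sw w s e
              * (w i * (1:ℝ) * psiContrast w s e b i)) := by
          refine Finset.sum_congr rfl fun i hi => ?_
          have hp := hpoint i hi
          linear_combination (w i * psiContrast w s e b i) * hp
      _ = (∑ i ∈ Finset.Icc s e, w i * μvec i * psiContrast w s e b i)
            - ∑ i ∈ Finset.Icc s e, (α * Sw w s τ + β * Sw w (τ+1) e) / Sw w s e
              * (w i * (1:ℝ) * psiContrast w s e b i) := Finset.sum_sub_distrib _ _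
      _ = winner N w μvec (psiContrast w s e b)
            - (α * Sw w s τ + β * Sw w (τ+1) e) / Sw w s e
              * winner N w (fun _ => (1:ℝ)) (psiContrast w s e b) := by
          rw [hrestrict μvec b hb1 hb2, hrestrict (fun _ => (1:ℝ)) b hb1 hb2, Finset.mul_sum]
      _ = winner N w (psiContrast w s e b) μvec := by
          rw [hzero b hb1 hb2, winner_comm N w μvec]; ring
  -- fix b = bhat; specialize
  have hεvb := hεv bhat hbhat1 hbhat2
  have hετ := hεψ τ hsτ hτe
  have hεb := hεψ bhat hbhat1 hbhat2
  set Aτ := winner N w (psiContrast w s e τ) μvec with hAτdef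
  set Ab := winner N w (psiContrast w s e bhat) μvec with hAbdef
  set vf := (fun i => psiContrast w s e τ i * Aτ - psiContrast w s e bhat i * Ab)
    with hvfdef
  have hx1 : Aτ * winner N w (psiContrast w s e τ) (psiContrast w s e bhat) = Ab := by
    have h := hcross bhat hbhat1 hbhat2
    rw [← hAbdef] at h
    exact h
  have hnτ := hnorm τ hsτ hτe
  have hnb := hnorm bhat hbhat1 hbhat2
  have hcb : winner N w (psiContrast w s e bhat) (psiContrast w s e τ)
      = winner N w (psiContrast w s e τ) (psiContrast w s e bhat) := winner_comm N w _ _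
  have hvτ : winner N w vf (psiContrast w s e τ)
      = Aτ - Ab * winner N w (psiContrast w s e τ) (psiContrast w s e bhat) := by
    rw [hvfdef, winner_sub_smul, hnτ, hcb]; ring
  have hvb : winner N w vf (psiContrast w s e bhat)
      = Aτ * winner N w (psiContrast w s e τ) (psiContrast w s e bhat) - Ab := by
    rw [hvfdef, winner_sub_smul, hnb]; ring
  have hvv : winner N w vf vf = Aτ ^ 2 - Ab ^ 2 := by
    have h := winner_sub_smul N w (psiContrast w s e τ) (psiContrast w s e bhat) vf Aτ Ab
    rw [← hvfdef] at h
    rw [h, winner_comm N w (psiContrast w s e τ) vf,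
      winner_comm N w (psiContrast w s e bhat) vf, hvτ, hvb]
    linear_combination (-2 : ℝ) * Ab * hx1
  have hvμ : winner N w vf μvec = Aτ ^ 2 - Ab ^ 2 := by
    rw [hvfdef, winner_sub_smul, ← hAτdef, ← hAbdef]; ring
  have hvε : winner N w vf ε
      = Aτ * winner N w ε (psiContrast w s e τ)
        - Ab * winner N w ε (psiContrast w s e bhat) := by
    rw [hvfdef, winner_sub_smul, winner_comm N w (psiContrast w s e τ) ε,
      winner_comm N w (psiContrast w s e bhat) ε]
  have hvY : winner N w vf Y = winner N w vf μvec + winner N w vf ε := by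
    have h0 : winner N w vf Y = winner N w (fun i => μvec i + ε i) vf := by
      rw [winner_comm]
      exact Finset.sum_congr rfl fun i _ => by rw [hY i]
    rw [h0, winner_add_left, winner_comm N w μvec vf, winner_comm N w ε vf]
  -- CUSUM as inner product
  have hW : ∀ b, s ≤ b → b < e →
      wCUSUM w Y s e b = |winner N w Y (psiContrast w s e b)| := by
    intro b hb1 hb2
    have hp : 0 < Sw w s b := Sw_pos hw hb1
    have hq : 0 < Sw w (b+1) e := Sw_pos hw (by omega)
    rw [hpsi_eval Y b hb1 hb2]
    unfold wCUSUM
    rw [← abs_of_nonneg (Real.sqrt_nonneg (Sw w s b * Sw w (b+1) e / Sw w s e)),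
      ← abs_mul]
    congr 1
    have e1 : Real.sqrt (Sw w s b * Sw w (b+1) e / Sw w s e) * (Sw w s b)⁻¹
        = Real.sqrt (Sw w (b+1) e / (Sw w s b * Sw w s e)) := by
      rw [← hsq1 _ _ hp hq, mul_assoc, mul_inv_cancel₀ hp.ne', mul_one]
    have e2 : Real.sqrt (Sw w s b * Sw w (b+1) e / Sw w s e) * (Sw w (b+1) e)⁻¹
        = Real.sqrt (Sw w s b / (Sw w s e * Sw w (b+1) e)) := by
      rw [← hsq2 _ _ hp hq, mul_assoc, mul_inv_cancel₀ hq.ne', mul_one]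
    rw [mul_sub, ← mul_assoc, ← mul_assoc, e1, e2]
  have hYψ : ∀ b, s ≤ b → b < e →
      winner N w Y (psiContrast w s e b)
        = winner N w (psiContrast w s e b) μvec + winner N w ε (psiContrast w s e b) := by
    intro b hb1 hb2
    have h0 : winner N w Y (psiContrast w s e b)
        = winner N w (fun i => μvec i + ε i) (psiContrast w s e b) :=
      Finset.sum_congr rfl fun i _ => by rw [hY i]
    rw [h0, winner_add_left, winner_comm N w μvec]
  have hmax2 : |Aτ + winner N w ε (psiContrast w s e τ)|
      ≤ |Ab + winner N w ε (psiContrast w s e bhat)| := by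
    have h := hbhat_max τ hsτ hτe
    rw [hW τ hsτ hτe, hW bhat hbhat1 hbhat2, hYψ τ hsτ hτe,
      hYψ bhat hbhat1 hbhat2, ← hAτdef, ← hAbdef] at h
    exact h
  -- the endgame, shared by both cases
  have endgame : (1 + Real.sqrt 2) ^ 2 * r ^ 2 < winner N w vf vf → 0 < Ab → False := by
    intro hvvlb hAbpos
    have hvvpos : 0 < winner N w vf vf := lt_trans (by positivity) hvvlb
    have htsq : Real.sqrt (winner N w vf vf) ^ 2 = winner N w vf vf :=
      Real.sq_sqrt hvvpos.le
    have htlb : (1 + Real.sqrt 2) * r < Real.sqrt (winner N w vf vf) := by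
      rw [Real.lt_sqrt (by positivity), mul_pow]
      exact hvvlb
    have hwnval : wnorm N w vf = Real.sqrt (winner N w vf vf) := rfl
    have hvne : wnorm N w vf ≠ 0 := by
      rw [hwnval]
      exact ne_of_gt (lt_trans (by positivity) htlb)
    have habs : |winner N w vf ε| ≤ r * Real.sqrt (winner N w vf vf) := by
      have h := hεvb hvne
      rwa [hwnval] at h
    have hvY_lb : Real.sqrt (winner N w vf vf) ^ 2 - r * Real.sqrt (winner N w vf vf)
        ≤ winner N w vf Y := by
      rw [hvY, hvμ]
      have h5 := (abs_le.1 habs).1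
      linarith [htsq, hvv, h5]
    have hvYf : winner N w vf Y
        = Aτ * (Aτ + winner N w ε (psiContrast w s e τ))
          - Ab * (Ab + winner N w ε (psiContrast w s e bhat)) := by
      rw [hvY, hvμ, hvε]; ring
    have h1f : Ab ^ 2 = Aτ ^ 2 - Real.sqrt (winner N w vf vf) ^ 2 := by
      rw [htsq, hvv]; ring
    exact final_arith r Aτ Ab (Real.sqrt (winner N w vf vf))
      (winner N w ε (psiContrast w s e τ)) (winner N w ε (psiContrast w s e bhat))
      hr hAτpos hAbpos htlb h1f hετ hεb hmax2 (hvYf ▸ hvY_lb)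
  by_contra hcon
  push_neg at hcon
  have hcon' : 2 * (1 + Real.sqrt 2) ^ 2 * r ^ 2
      < Sw w (min τ bhat + 1) (max τ bhat) * (α - β) ^ 2 := by
    rw [div_lt_iff₀ (by positivity)] at hcon
    exact hcon
  rcases le_or_gt bhat τ with hbτ | hτb
  · -- bhat ≤ τ
    rw [min_eq_right hbτ, max_eq_left hbτ] at hcon'
    have hp : 0 < Sw w s bhat := Sw_pos hw hbhat1
    have hqb : 0 < Sw w (bhat+1) e := Sw_pos hw (by omega)
    have hG : 0 < Sw w (bhat+1) τ := by
      by_contra h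
      push_neg at h
      have h2 : Sw w (bhat+1) τ * (α - β) ^ 2 ≤ 0 :=
        mul_nonpos_iff.2 (Or.inr ⟨h, sq_nonneg _⟩)
      linarith [(by positivity : (0:ℝ) < 2 * (1 + Real.sqrt 2) ^ 2 * r ^ 2)]
    have hQκ : 2 * (1 + Real.sqrt 2) ^ 2 * r ^ 2 < Sw w (τ+1) e * (α - β) ^ 2 := by
      have hmin : min (Sw w s τ) (Sw w (τ+1) e) ≤ Sw w (τ+1) e := min_le_right _ _
      have h2 : min (Sw w s τ) (Sw w (τ+1) e) * (α - β) ^ 2 ≤ Sw w (τ+1) e * (α - β) ^ 2 :=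
        mul_le_mul_of_nonneg_right hmin (sq_nonneg _)
      linarith
    have hqsplit : Sw w (bhat+1) e = Sw w (bhat+1) τ + Sw w (τ+1) e :=
      Sw_split w (by omega) (by omega) hτe.le
    have hpsplit : Sw w s τ = Sw w s bhat + Sw w (bhat+1) τ :=
      Sw_split w hs (by omega) hbτ
    have hAbval := hA_left bhat hbhat1 hbτ
    rw [← hAbdef] at hAbval
    have hAbpos : 0 < Ab := by
      rw [hAbval]
      exact mul_pos (mul_pos hκpos hQ) (Real.sqrt_pos.2 (by positivity))
    have hAbsq : Ab ^ 2 = (α - β) ^ 2 * (Sw w (τ+1) e) ^ 2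
        * (Sw w s bhat / (Sw w s e * Sw w (bhat+1) e)) := by
      rw [hAbval, mul_pow, mul_pow, Real.sq_sqrt (by positivity)]
    have hvvval : winner N w vf vf
        = (α - β) ^ 2 * (Sw w (bhat+1) τ * Sw w (τ+1) e)
            / (Sw w (bhat+1) τ + Sw w (τ+1) e) := by
      rw [hvv, hAτsq, hAbsq, hTsplit, hpsplit, hqsplit]
      have d1 : Sw w s bhat + Sw w (bhat+1) τ + Sw w (τ+1) e ≠ 0 := by positivity
      have d2 : Sw w (bhat+1) τ + Sw w (τ+1) e ≠ 0 := by positivity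
      field_simp
      ring
    have hvvlb : (1 + Real.sqrt 2) ^ 2 * r ^ 2 < winner N w vf vf := by
      rw [hvvval]
      exact harmonic_lb _ _ _ _ hG hQ (by linarith) (by linarith)
    exact absurd (endgame hvvlb hAbpos) not_false
  · -- τ < bhat
    rw [min_eq_left hτb.le, max_eq_right hτb.le] at hcon'
    have hp : 0 < Sw w s bhat := Sw_pos hw hbhat1
    have hqb : 0 < Sw w (bhat+1) e := Sw_pos hw (by omega)
    have hG : 0 < Sw w (τ+1) bhat := by
      by_contra h
      push_neg at h
      have h2 : Sw w (τ+1) bhat * (α - β) ^ 2 ≤ 0 :=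
        mul_nonpos_iff.2 (Or.inr ⟨h, sq_nonneg _⟩)
      linarith [(by positivity : (0:ℝ) < 2 * (1 + Real.sqrt 2) ^ 2 * r ^ 2)]
    have hPκ : 2 * (1 + Real.sqrt 2) ^ 2 * r ^ 2 < Sw w s τ * (α - β) ^ 2 := by
      have hmin : min (Sw w s τ) (Sw w (τ+1) e) ≤ Sw w s τ := min_le_left _ _
      have h2 : min (Sw w s τ) (Sw w (τ+1) e) * (α - β) ^ 2 ≤ Sw w s τ * (α - β) ^ 2 :=
        mul_le_mul_of_nonneg_right hmin (sq_nonneg _)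
      linarith
    have hqsplit : Sw w (τ+1) e = Sw w (τ+1) bhat + Sw w (bhat+1) e :=
      Sw_split w (by omega) (by omega) hbhat2.le
    have hpsplit : Sw w s bhat = Sw w s τ + Sw w (τ+1) bhat :=
      Sw_split w hs (by omega) hτb.le
    have hAbval := hA_right bhat hτb.le hbhat2
    rw [← hAbdef] at hAbval
    have hAbpos : 0 < Ab := by
      rw [hAbval]
      exact mul_pos (mul_pos hκpos hP) (Real.sqrt_pos.2 (by positivity))
    have hAbsq : Ab ^ 2 = (α - β) ^ 2 * (Sw w s τ) ^ 2
        * (Sw w (bhat+1) e / (Sw w s bhat * Sw w s e)) := by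
      rw [hAbval, mul_pow, mul_pow, Real.sq_sqrt (by positivity)]
    have hvvval : winner N w vf vf
        = (α - β) ^ 2 * (Sw w (τ+1) bhat * Sw w s τ)
            / (Sw w (τ+1) bhat + Sw w s τ) := by
      rw [hvv, hAτsq, hAbsq, hTsplit, hqsplit, hpsplit]
      have d1 : Sw w s τ + (Sw w (τ+1) bhat + Sw w (bhat+1) e) ≠ 0 := by positivity
      have d2 : Sw w (τ+1) bhat + Sw w s τ ≠ 0 := by positivity
      field_simp
      ring
    have hvvlb : (1 + Real.sqrt 2) ^ 2 * r ^ 2 < winner N w vf vf := by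
      rw [hvvval]
      exact harmonic_lb _ _ _ _ hG hP (by linarith) (by linarith)
    exact absurd (endgame hvvlb hAbpos) not_false

/-- **Deterministic localization of the weighted CUSUM maximizer under noise
control (Step Four of the proof of Theorem 2).** Suppose `μ` has a single change
at `τ` on `[s,e]` with `κ = |α - β| > 0`, `Y = μ + ε`, and `r > 0`. Assume for
every `s ≤ b < e` that `|⟨ε,ψ^{b}⟩_w| ≤ r` and that
`|⟨v_b,ε⟩_w| ≤ r·‖v_b‖_w` whenever
`v_b = ψ^{τ}⟨ψ^{τ},μ⟩_w − ψ^{b}⟨ψ^{b},μ⟩_w ≠ 0`. If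
`min{S^w_{s:τ}, S^w_{(τ+1):e}}·κ² > 2(1+√2)²·r²`, then every maximizer `b̂` of
`b ↦ W_{s,e}^{Y}(b)` over `s ≤ b < e` satisfies
`Σ_{min(τ,b̂) < i ≤ max(τ,b̂)} w_i ≤ 2(1+√2)²·r²/κ²`. -/
theorem deterministic_cusum_maximizer_localization
    (N : ℕ) (w : ℕ → ℝ) (hw : ∀ i, 0 < w i)
    (μvec : ℕ → ℝ) (s e τ : ℕ)
    (hs : 1 ≤ s) (hsτ : s ≤ τ) (hτe : τ < e) (heN : e ≤ N)
    (α β : ℝ)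
    (hα : ∀ i, s ≤ i → i ≤ τ → μvec i = α)
    (hβ : ∀ i, τ < i → i ≤ e → μvec i = β)
    (hκ : 0 < |α - β|)
    (ε Y : ℕ → ℝ) (hY : ∀ i, Y i = μvec i + ε i)
    (r : ℝ) (hr : 0 < r)
    (hεψ : ∀ b, s ≤ b → b < e → |winner N w ε (psiContrast w s e b)| ≤ r)
    (hεv : ∀ b, s ≤ b → b < e →
      wnorm N w (fun i =>
        psiContrast w s e τ i * winner N w (psiContrast w s e τ) μvec
          - psiContrast w s e b i * winner N w (psiContrast w s e b) μvec) ≠ 0 →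
      |winner N w (fun i =>
        psiContrast w s e τ i * winner N w (psiContrast w s e τ) μvec
          - psiContrast w s e b i * winner N w (psiContrast w s e b) μvec) ε|
        ≤ r * wnorm N w (fun i =>
            psiContrast w s e τ i * winner N w (psiContrast w s e τ) μvec
              - psiContrast w s e b i * winner N w (psiContrast w s e b) μvec))
    (hsnr : min (Sw w s τ) (Sw w (τ + 1) e) * |α - β| ^ 2
      > 2 * (1 + Real.sqrt 2) ^ 2 * r ^ 2)
    (bhat : ℕ) (hbhat1 : s ≤ bhat) (hbhat2 : bhat < e)
    (hbhat_max : ∀ b, s ≤ b → b < e → wCUSUM w Y s e b ≤ wCUSUM w Y s e bhat) :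
    ∑ i ∈ Finset.Icc (min τ bhat + 1) (max τ bhat), w i
      ≤ 2 * (1 + Real.sqrt 2) ^ 2 * r ^ 2 / |α - β| ^ 2 := by
  rcases lt_or_gt_of_ne (fun h : α = β => by simp [h] at hκ) with hlt | hgt
  · -- α < β : apply aux_loc to the negated data
    have hsum_neg : ∀ u v2 : ℕ, (∑ i ∈ Finset.Icc u v2, w i * -Y i)
        = -∑ i ∈ Finset.Icc u v2, w i * Y i := by
      intro u v2
      rw [← Finset.sum_neg_distrib]
      exact Finset.sum_congr rfl fun i _ => by ring
    have hwc : ∀ b : ℕ, wCUSUM w (fun i => -Y i) s e b = wCUSUM w Y s e b := by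
      intro b
      unfold wCUSUM
      congr 1
      rw [hsum_neg s b, hsum_neg (b+1) e,
        show (Sw w s b)⁻¹ * -(∑ i ∈ Finset.Icc s b, w i * Y i)
            - (Sw w (b+1) e)⁻¹ * -(∑ i ∈ Finset.Icc (b+1) e, w i * Y i)
          = -((Sw w s b)⁻¹ * (∑ i ∈ Finset.Icc s b, w i * Y i)
            - (Sw w (b+1) e)⁻¹ * ∑ i ∈ Finset.Icc (b+1) e, w i * Y i) from by ring,
        abs_neg]
    have habsneg : |(-α) - (-β)| = |α - β| := by
      rw [show (-α) - (-β) = -(α - β) from by ring, abs_neg]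
    have key := aux_loc N w hw (fun i => -μvec i) s e τ hs hsτ hτe heN (-α) (-β)
      (fun i h1 h2 => by show -μvec i = -α; rw [hα i h1 h2])
      (fun i h1 h2 => by show -μvec i = -β; rw [hβ i h1 h2])
      (neg_lt_neg hlt)
      (fun i => -ε i) (fun i => -Y i)
      (fun i => by show -Y i = -μvec i + -ε i; rw [hY i]; ring)
      r hr
      (fun b hb1 hb2 => by
        rw [winner_neg_left, abs_neg]; exact hεψ b hb1 hb2)
      (fun b hb1 hb2 => by
        have hveq : (fun i => psiContrast w s e τ i
              * winner N w (psiContrast w s e τ) (fun j => -μvec j)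
            - psiContrast w s e b i
              * winner N w (psiContrast w s e b) (fun j => -μvec j))
          = fun i => -(psiContrast w s e τ i
              * winner N w (psiContrast w s e τ) μvec
            - psiContrast w s e b i
              * winner N w (psiContrast w s e b) μvec) := by
          funext i
          rw [winner_neg_right, winner_neg_right]; ring
        rw [hveq]
        have hwneq : wnorm N w (fun i => -(psiContrast w s e τ i
              * winner N w (psiContrast w s e τ) μvec
            - psiContrast w s e b i
              * winner N w (psiContrast w s e b) μvec))
          = wnorm N w (fun i => psiContrast w s e τ i
              * winner N w (psiContrast w s e τ) μvec
            - psiContrast w s e b i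
              * winner N w (psiContrast w s e b) μvec) := by
          unfold wnorm
          rw [winner_neg_left, winner_neg_right, neg_neg]
        have hwin : winner N w (fun i => -(psiContrast w s e τ i
              * winner N w (psiContrast w s e τ) μvec
            - psiContrast w s e b i
              * winner N w (psiContrast w s e b) μvec)) (fun i => -ε i)
          = winner N w (fun i => psiContrast w s e τ i
              * winner N w (psiContrast w s e τ) μvec
            - psiContrast w s e b i
              * winner N w (psiContrast w s e b) μvec) ε := by
          rw [winner_neg_left, winner_neg_right, neg_neg]
        rw [hwneq, hwin]
        exact hεv b hb1 hb2)
      (by rw [habsneg]; exact hsnr)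
      bhat hbhat1 hbhat2
      (fun b hb1 hb2 => by rw [hwc b, hwc bhat]; exact hbhat_max b hb1 hb2)
    rwa [habsneg] at key
  · exact aux_loc N w hw μvec s e τ hs hsτ hτe heN α β hα hβ hgt ε Y hY r hr hεψ hεv hsnr
      bhat hbhat1 hbhat2 hbhat_max
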